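/- Jacobi's triple product identity: ∏_{n≥1} (1 - z q^(n-1))(1 - z^(-1) q^n)(1 - q^n) = ∑_{n∈ℤ} (-1)^n z^n q^(n(n-1)/2). -/

import Mathlib

open Finset Filter Complex Topology

noncomputable section
namespace JTP

/-- Gaussian binomial coefficients (as complex numbers), via the q-Pascal rule. -/
def G (q : ℂ) : ℕ → ℕ → ℂ
  | 0, 0 => 1
  | 0, _ + 1 => 0
  | _ + 1, 0 => 1
  | n + 1, k + 1 => G q n (k + 1) + q ^ (n - k) * G q n k

lemma G_zero_right (q : ℂ) (n : ℕ) : G q n 0 = 1 := by cases n <;> rfl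

lemma G_eq_zero (q : ℂ) : ∀ n k, n < k → G q n k = 0 := by
  intro n
  induction n with
  | zero => intro k hk; match k, hk with | k + 1, _ => rfl
  | succ n ih =>
    intro k hk
    match k, hk with
    | k + 1, hk =>
      show G q n (k + 1) + q ^ (n - k) * G q n k = 0
      rw [ih _ (by omega), ih _ (by omega)]
      ring

lemma even_n_mul_pred (k : ℕ) : k * (k - 1) % 2 = 0 := by
  cases k with
  | zero => rfl
  | succ s =>
    obtain ⟨r, hr⟩ := Nat.even_mul_succ_self s
    have heq : (s + 1) * (s + 1 - 1) = s * (s + 1) := by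
      rw [Nat.succ_sub_one]; ring
    omega

lemma exp_succ (j : ℕ) : (j + 1) * j / 2 = j * (j - 1) / 2 + j := by
  have h1 : j * (j - 1) % 2 = 0 := even_n_mul_pred j
  have h3 : (j + 1) * j = j * (j - 1) + 2 * j := by
    cases j with
    | zero => rfl
    | succ s => rw [Nat.succ_sub_one]; ring
  omega

/-- Gauss's `q`-binomial theorem. -/
lemma gauss (q x : ℂ) (n : ℕ) :
    ∑ k ∈ range (n + 1), q ^ (k * (k - 1) / 2) * G q n k * x ^ k =
      ∏ j ∈ range n, (1 + x * q ^ j) := by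
  induction n with
  | zero => simp [G]
  | succ n ih =>
    have expand : ∀ k ∈ range (n + 1),
        q ^ ((k + 1) * ((k + 1) - 1) / 2) * G q (n + 1) (k + 1) * x ^ (k + 1) =
          q ^ ((k + 1) * ((k + 1) - 1) / 2) * G q n (k + 1) * x ^ (k + 1)
            + (x * q ^ n) * (q ^ (k * (k - 1) / 2) * G q n k * x ^ k) := by
      intro k hk
      have hG : G q (n + 1) (k + 1) = G q n (k + 1) + q ^ (n - k) * G q n k := rfl
      rw [hG, Nat.add_sub_cancel]
      have hqq : q ^ ((k + 1) * k / 2) * q ^ (n - k) = q ^ n * q ^ (k * (k - 1) / 2) := by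
        rw [← pow_add, ← pow_add]
        congr 1
        have h2 := exp_succ k
        have hk' : k ≤ n := by have := mem_range.mp hk; omega
        omega
      calc q ^ ((k + 1) * k / 2) * (G q n (k + 1) + q ^ (n - k) * G q n k) * x ^ (k + 1)
          = q ^ ((k + 1) * k / 2) * G q n (k + 1) * x ^ (k + 1)
            + (q ^ ((k + 1) * k / 2) * q ^ (n - k)) * G q n k * x ^ (k + 1) := by ring
        _ = _ := by rw [hqq]; ring
    calc ∑ k ∈ range (n + 1 + 1), q ^ (k * (k - 1) / 2) * G q (n + 1) k * x ^ k
        = ∑ k ∈ range (n + 1), q ^ ((k + 1) * ((k + 1) - 1) / 2) * G q (n + 1) (k + 1) * x ^ (k + 1)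
          + q ^ (0 * (0 - 1) / 2) * G q (n + 1) 0 * x ^ 0 :=
          Finset.sum_range_succ' _ (n + 1)
      _ = ∑ k ∈ range (n + 1), (q ^ ((k + 1) * ((k + 1) - 1) / 2) * G q n (k + 1) * x ^ (k + 1)
            + (x * q ^ n) * (q ^ (k * (k - 1) / 2) * G q n k * x ^ k)) + 1 := by
          rw [Finset.sum_congr rfl expand]; simp [G_zero_right]
      _ = (∑ k ∈ range (n + 1), q ^ ((k + 1) * ((k + 1) - 1) / 2) * G q n (k + 1) * x ^ (k + 1)
            + q ^ (0 * (0 - 1) / 2) * G q n 0 * x ^ 0)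
          + (x * q ^ n) * ∑ k ∈ range (n + 1), q ^ (k * (k - 1) / 2) * G q n k * x ^ k := by
          rw [Finset.sum_add_distrib, Finset.mul_sum]; simp [G_zero_right]; ring
      _ = ∑ k ∈ range (n + 1 + 1), q ^ (k * (k - 1) / 2) * G q n k * x ^ k
          + (x * q ^ n) * ∑ k ∈ range (n + 1), q ^ (k * (k - 1) / 2) * G q n k * x ^ k := by
          rw [← Finset.sum_range_succ' (fun k => q ^ (k * (k - 1) / 2) * G q n k * x ^ k) (n + 1)]
      _ = ∑ k ∈ range (n + 1), q ^ (k * (k - 1) / 2) * G q n k * x ^ k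
          + (x * q ^ n) * ∑ k ∈ range (n + 1), q ^ (k * (k - 1) / 2) * G q n k * x ^ k := by
          rw [Finset.sum_range_succ]
          rw [G_eq_zero q n (n + 1) (by omega)]
          ring
      _ = (∏ j ∈ range n, (1 + x * q ^ j)) * (1 + x * q ^ n) := by rw [ih]; ring
      _ = ∏ j ∈ range (n + 1), (1 + x * q ^ j) := (Finset.prod_range_succ _ _).symm


def F (q : ℂ) (n : ℕ) : ℂ := ∏ j ∈ range n, (1 - q ^ (j + 1))

lemma F_succ (q : ℂ) (n : ℕ) : F q (n + 1) = F q n * (1 - q ^ (n + 1)) :=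
  Finset.prod_range_succ _ _

lemma G_mul_F (q : ℂ) : ∀ n k, k ≤ n → G q n k * F q k * F q (n - k) = F q n := by
  intro n
  induction n with
  | zero => intro k hk; interval_cases k; simp [G, F]
  | succ n ih =>
    intro k hk
    match k with
    | 0 => simp [G_zero_right, F]
    | k + 1 =>
      have hG : G q (n + 1) (k + 1) = G q n (k + 1) + q ^ (n - k) * G q n k := rfl
      rw [hG]
      rcases Nat.lt_or_ge k n with hkn | hkn
      · have ih1 := ih (k + 1) (by omega)
        have ih2 := ih k (by omega)
        have e1 : n + 1 - (k + 1) = n - k := by omega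
        have enk : n - k = (n - (k + 1)) + 1 := by omega
        have hFnk : F q (n - k) = F q (n - (k + 1)) * (1 - q ^ (n - k)) := by
          conv_lhs => rw [enk, F_succ]
          rw [← enk]
        have hq1 : q ^ (n - k) * q ^ (k + 1) = q ^ (n + 1) := by
          rw [← pow_add]; congr 1; omega
        rw [e1, F_succ q n, F_succ q k, hFnk]
        rw [F_succ q k] at ih1
        rw [hFnk] at ih2
        linear_combination (1 - q ^ (n - k)) * ih1 + q ^ (n - k) * (1 - q ^ (k + 1)) * ih2
          - F q n * hq1
      · have hk' : k = n := by omega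
        subst hk'
        rw [G_eq_zero q k (k + 1) (by omega)]
        have hF0 : F q 0 = 1 := Finset.prod_range_zero _
        have ih2 := ih k le_rfl
        rw [Nat.sub_self, hF0, mul_one] at ih2
        simp only [Nat.sub_self, pow_zero, zero_add, one_mul]
        rw [hF0, mul_one, F_succ]
        linear_combination (1 - q ^ (k + 1)) * ih2


section bounds
variable {q : ℂ} (hq : ‖q‖ < 1)
include hq

lemma factor_ne (j : ℕ) : (1 : ℂ) - q ^ (j + 1) ≠ 0 := by
  intro h
  have h1 : q ^ (j + 1) = 1 := by linear_combination -h
  have : ‖q ^ (j + 1)‖ < 1 := by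
    rw [norm_pow]
    calc ‖q‖ ^ (j + 1) ≤ ‖q‖ ^ 1 := by
          apply pow_le_pow_of_le_one (norm_nonneg q) hq.le; omega
      _ < 1 := by simpa using hq
  rw [h1] at this; simp at this

lemma F_ne_zero (n : ℕ) : F q n ≠ 0 :=
  Finset.prod_ne_zero_iff.2 fun j _ => factor_ne hq j

lemma sum_pow_le (n : ℕ) : ∑ j ∈ range n, ‖q‖ ^ (j + 1) ≤ ‖q‖ / (1 - ‖q‖) := by
  have h0 : (0:ℝ) ≤ ‖q‖ := norm_nonneg q
  have h1 : (0:ℝ) < 1 - ‖q‖ := by linarith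
  have : ∑ j ∈ range n, ‖q‖ ^ (j + 1) = ‖q‖ * ∑ j ∈ range n, ‖q‖ ^ j := by
    rw [Finset.mul_sum]; exact Finset.sum_congr rfl fun j _ => by ring
  rw [this]
  have hg : ∑ j ∈ range n, ‖q‖ ^ j ≤ 1 / (1 - ‖q‖) := by
    have := Summable.sum_le_tsum (range n) (fun i _ => by positivity)
      (summable_geometric_of_lt_one h0 hq)
    rw [tsum_geometric_of_lt_one h0 hq] at this
    simpa using this
  calc ‖q‖ * ∑ j ∈ range n, ‖q‖ ^ j ≤ ‖q‖ * (1 / (1 - ‖q‖)) := by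
        apply mul_le_mul_of_nonneg_left hg h0
    _ = ‖q‖ / (1 - ‖q‖) := by ring

lemma F_norm_le (n : ℕ) : ‖F q n‖ ≤ Real.exp (‖q‖ / (1 - ‖q‖)) := by
  rw [F, norm_prod]
  calc ∏ j ∈ range n, ‖1 - q ^ (j + 1)‖ ≤ ∏ j ∈ range n, Real.exp (‖q‖ ^ (j + 1)) := by
        apply Finset.prod_le_prod (fun j _ => norm_nonneg _)
        intro j _
        calc ‖1 - q ^ (j + 1)‖ ≤ ‖(1:ℂ)‖ + ‖q ^ (j + 1)‖ := norm_sub_le _ _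
          _ = 1 + ‖q‖ ^ (j + 1) := by rw [norm_one, norm_pow]
          _ ≤ Real.exp (‖q‖ ^ (j + 1)) := by
              have := Real.add_one_le_exp (‖q‖ ^ (j + 1)); linarith
    _ = Real.exp (∑ j ∈ range n, ‖q‖ ^ (j + 1)) := by rw [Real.exp_sum]
    _ ≤ _ := Real.exp_le_exp.2 (sum_pow_le hq n)

lemma one_sub_ge_exp {a : ℝ} (ha : 0 ≤ a) (haq : a ≤ ‖q‖) :
    Real.exp (-(a / (1 - ‖q‖))) ≤ 1 - a := by
  have h0 : (0:ℝ) ≤ ‖q‖ := norm_nonneg q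
  have h1 : (0:ℝ) < 1 - ‖q‖ := by linarith
  have h2 : (0:ℝ) < 1 - a := by linarith
  have key : Real.exp (-(a / (1 - a))) ≤ 1 - a := by
    have h3 : 1 + a / (1 - a) ≤ Real.exp (a / (1 - a)) := by
      have := Real.add_one_le_exp (a / (1 - a)); linarith
    have h4 : (1 : ℝ) / (1 - a) = 1 + a / (1 - a) := by field_simp; ring
    have h5 : (1:ℝ) / (1 - a) ≤ Real.exp (a / (1 - a)) := by rw [h4]; exact h3
    rw [Real.exp_neg]
    rw [inv_le_comm₀ (Real.exp_pos _) h2]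
    calc (1 - a)⁻¹ = 1 / (1 - a) := by ring
      _ ≤ Real.exp (a / (1 - a)) := h5
  calc Real.exp (-(a / (1 - ‖q‖))) ≤ Real.exp (-(a / (1 - a))) := by
        apply Real.exp_le_exp.2
        have : a / (1 - a) ≤ a / (1 - ‖q‖) := by
          apply div_le_div_of_nonneg_left ha h1; linarith
        linarith
    _ ≤ 1 - a := key

lemma F_norm_ge (n : ℕ) :
    Real.exp (-(‖q‖ / (1 - ‖q‖) / (1 - ‖q‖))) ≤ ‖F q n‖ := by
  have h0 : (0:ℝ) ≤ ‖q‖ := norm_nonneg q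
  have h1 : (0:ℝ) < 1 - ‖q‖ := by linarith
  rw [F, norm_prod]
  have hpow : ∀ j : ℕ, ‖q‖ ^ (j + 1) ≤ ‖q‖ := fun j => by
    calc ‖q‖ ^ (j + 1) ≤ ‖q‖ ^ 1 := by
          apply pow_le_pow_of_le_one h0 hq.le; omega
      _ = ‖q‖ := pow_one _
  calc Real.exp (-(‖q‖ / (1 - ‖q‖) / (1 - ‖q‖)))
      ≤ Real.exp (-((∑ j ∈ range n, ‖q‖ ^ (j + 1)) / (1 - ‖q‖))) := by
        apply Real.exp_le_exp.2
        have := sum_pow_le hq n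
        have h2 : (∑ j ∈ range n, ‖q‖ ^ (j + 1)) / (1 - ‖q‖) ≤ ‖q‖ / (1 - ‖q‖) / (1 - ‖q‖) :=
          by gcongr
        linarith
    _ = ∏ j ∈ range n, Real.exp (-(‖q‖ ^ (j + 1) / (1 - ‖q‖))) := by
        rw [← Real.exp_sum]
        congr 1
        rw [Finset.sum_div]
        exact (Finset.sum_neg_distrib _).symm
    _ ≤ ∏ j ∈ range n, ‖1 - q ^ (j + 1)‖ := by
        apply Finset.prod_le_prod (fun j _ => (Real.exp_pos _).le)
        intro j _
        calc Real.exp (-(‖q‖ ^ (j + 1) / (1 - ‖q‖))) ≤ 1 - ‖q‖ ^ (j + 1) :=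
              one_sub_ge_exp hq (by positivity) (hpow j)
          _ = ‖(1:ℂ)‖ - ‖q ^ (j + 1)‖ := by rw [norm_one, norm_pow]
          _ ≤ ‖1 - q ^ (j + 1)‖ := norm_sub_norm_le _ _

end bounds

lemma hasProd_zero_of_exists_eq_zero {f : ℕ → ℂ} (h : ∃ n, f n = 0) : HasProd f 0 := by
  obtain ⟨n₀, h₀⟩ := h
  have hev : ∀ᶠ s : Finset ℕ in atTop, ∏ i ∈ s, f i = 0 := by
    filter_upwards [eventually_ge_atTop ({n₀} : Finset ℕ)] with s hs
    exact Finset.prod_eq_zero (hs (Finset.mem_singleton_self n₀)) h₀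
  exact Tendsto.congr' (EventuallyEq.symm hev) tendsto_const_nhds

lemma multipliable_one_add {f : ℕ → ℂ} (hf : Summable f) :
    Multipliable fun n => 1 + f n := by
  by_cases h : ∀ n, 1 + f n ≠ 0
  · exact Complex.multipliable_one_add_of_summable hf
  · push_neg at h
    obtain ⟨n₀, h₀⟩ := h
    exact (hasProd_zero_of_exists_eq_zero ⟨n₀, h₀⟩).multipliable


lemma tri_nonneg (t : ℤ) : 0 ≤ t * (t - 1) / 2 := by
  apply Int.ediv_nonneg _ (by norm_num)
  rcases le_or_gt t 0 with h | h
  · nlinarith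
  · nlinarith [Int.add_one_le_iff.2 h]

lemma prod_zpow {x : ℂ} (hx : x ≠ 0) (f : ℕ → ℤ) (n : ℕ) :
    ∏ i ∈ range n, x ^ f i = x ^ (∑ i ∈ range n, f i) := by
  induction n with
  | zero => simp
  | succ n ih => rw [prod_range_succ, sum_range_succ, ih, ← zpow_add₀ hx]

lemma int_sq_arith (m k : ℕ) :
    (↑(k * (k - 1) / 2) : ℤ) + (-(m : ℤ)) * k =
      -(↑(m * (m + 1) / 2) : ℤ) + ((k : ℤ) - m) * (((k : ℤ) - m) - 1) / 2 := by
  have e1 : k * (k - 1) % 2 = 0 := even_n_mul_pred k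
  have e2 : m * (m + 1) % 2 = 0 := by
    have := even_n_mul_pred (m + 1)
    have h : (m + 1) * (m + 1 - 1) = m * (m + 1) := by rw [Nat.succ_sub_one]; ring
    omega
  set K : ℤ := (k : ℤ) with hK
  set M : ℤ := (m : ℤ) with hM
  have c1 : K * (K - 1) = ((k * (k - 1) : ℕ) : ℤ) := by
    cases k with
    | zero => simp [hK]
    | succ s => rw [hK]; push_cast [Nat.succ_sub_one]; ring
  have c2 : M * (M + 1) = ((m * (m + 1) : ℕ) : ℤ) := by rw [hM]; push_cast; ring
  have h1 : 2 * (↑(k * (k - 1) / 2) : ℤ) = K * (K - 1) := by rw [c1]; omega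
  have h2 : 2 * (↑(m * (m + 1) / 2) : ℤ) = M * (M + 1) := by rw [c2]; omega
  obtain ⟨r, hr⟩ := Int.even_mul_pred_self (K - M)
  have h3 : 2 * ((K - M) * ((K - M) - 1) / 2) = (K - M) * ((K - M) - 1) := by omega
  have key : 2 * ((↑(k * (k - 1) / 2) : ℤ) + (-M) * K) =
      2 * (-(↑(m * (m + 1) / 2) : ℤ) + (K - M) * ((K - M) - 1) / 2) := by
    linear_combination h1 + h2 - h3
  linarith

lemma sum_shift (m : ℕ) (f : ℤ → ℂ) :
    ∑ t ∈ Icc (-(m : ℤ)) m, f t = ∑ k ∈ range (2 * m + 1), f ((k : ℤ) - m) := by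
  have hemb : Icc (-(m : ℤ)) m
      = (range (2 * m + 1)).map ⟨fun k : ℕ => (k : ℤ) - m, fun a b h => by simp only at h; omega⟩ := by
    ext t
    simp only [Finset.mem_Icc, Finset.mem_map, Finset.mem_range, Function.Embedding.coeFn_mk]
    dsimp only [DFunLike.coe]
    constructor
    · rintro ⟨h1, h2⟩; exact ⟨(t + m).toNat, by omega, by omega⟩
    · rintro ⟨a, ha, rfl⟩; omega
  rw [hemb, Finset.sum_map]
  rfl

lemma finite_jtp (q z : ℂ) (hq0 : q ≠ 0) (hz : z ≠ 0) (m : ℕ) :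
    ∏ j ∈ range m, ((1 - z * q ^ j) * (1 - z⁻¹ * q ^ (j + 1))) =
      ∑ k ∈ range (2 * m + 1),
        (-1 : ℂ) ^ ((k : ℤ) - m) * z ^ ((k : ℤ) - m) *
          q ^ ((((k : ℤ) - m) * (((k : ℤ) - m) - 1) / 2).toNat) * G q (2 * m) k := by
  have hm1 : (-1 : ℂ) ≠ 0 := by norm_num
  set x : ℂ := -z * q ^ (-(m : ℤ)) with hx
  set u : ℂ := (-1 : ℂ) ^ (m : ℤ) * z ^ (m : ℤ) * q ^ (-((m * (m + 1) / 2 : ℕ) : ℤ)) with hu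
  have hu0 : u ≠ 0 := by
    apply mul_ne_zero (mul_ne_zero _ _) (zpow_ne_zero _ hq0)
    · exact zpow_ne_zero _ hm1
    · exact zpow_ne_zero _ hz
  have key := gauss q x (2 * m)
  -- Claim A : the product side
  have claimA : ∏ j ∈ range (2 * m), (1 + x * q ^ j)
      = u * ∏ j ∈ range m, ((1 - z * q ^ j) * (1 - z⁻¹ * q ^ (j + 1))) := by
    rw [two_mul, Finset.prod_range_add]
    have hsecond : ∏ j ∈ range m, (1 + x * q ^ (m + j)) = ∏ j ∈ range m, (1 - z * q ^ j) := by
      apply Finset.prod_congr rfl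
      intro j _
      have hqe : q ^ (-(m : ℤ)) * q ^ ((m + j : ℕ) : ℤ) = q ^ ((j : ℕ) : ℤ) := by
        rw [← zpow_add₀ hq0]; congr 1; push_cast; ring
      have : x * q ^ (m + j) = -(z * q ^ j) := by
        rw [hx, ← zpow_natCast q (m + j), ← zpow_natCast q j]
        linear_combination (-z) * hqe
      rw [this]; ring
    have hfirst : ∏ j ∈ range m, (1 + x * q ^ j)
        = ((-1 : ℂ) ^ (m : ℤ) * z ^ (m : ℤ) * q ^ (-((m * (m + 1) / 2 : ℕ) : ℤ)))
          * ∏ j ∈ range m, (1 - z⁻¹ * q ^ (j + 1)) := by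
      have step1 : ∏ j ∈ range m, (1 + x * q ^ j)
          = ∏ j ∈ range m, ((-z * q ^ ((j : ℤ) - m)) * (1 - z⁻¹ * q ^ (m - j))) := by
        apply Finset.prod_congr rfl
        intro j hj
        have hjm : j < m := Finset.mem_range.mp hj
        have hxq : x * q ^ j = -z * q ^ ((j : ℤ) - m) := by
          rw [hx, ← zpow_natCast q j, mul_assoc, ← zpow_add₀ hq0]
          congr 2; ring
        have hqq : q ^ ((j : ℤ) - m) * q ^ ((m - j : ℕ)) = 1 := by
          rw [← zpow_natCast q (m - j), ← zpow_add₀ hq0]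
          have : (j : ℤ) - m + ((m - j : ℕ) : ℤ) = 0 := by
            push_cast [Nat.cast_sub hjm.le]; ring
          rw [this, zpow_zero]
        have hzz : z * z⁻¹ = 1 := mul_inv_cancel₀ hz
        rw [hxq]
        linear_combination (-(z * z⁻¹)) * hqq - hzz
      rw [step1, Finset.prod_mul_distrib]
      congr 1
      · -- ∏ (-z * q^{j-m}) = (-1)^m z^m q^{Em}
        rw [Finset.prod_mul_distrib, Finset.prod_const, Finset.card_range, prod_zpow hq0]
        have hsum : ∑ j ∈ range m, ((j : ℤ) - m) = -((m * (m + 1) / 2 : ℕ) : ℤ) := by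
          rw [Finset.sum_sub_distrib, Finset.sum_const, Finset.card_range]
          have hg := Finset.sum_range_id_mul_two m
          have hgc : (∑ j ∈ range m, (j : ℤ)) = ((∑ j ∈ range m, j : ℕ) : ℤ) := by push_cast; rfl
          have e2 : m * (m + 1) % 2 = 0 := by
            have := even_n_mul_pred (m + 1)
            have h : (m + 1) * (m + 1 - 1) = m * (m + 1) := by rw [Nat.succ_sub_one]; ring
            omega
          have hmm : m * (m + 1) = m * (m - 1) + 2 * m := by
            cases m with
            | zero => rfl
            | succ s => rw [Nat.succ_sub_one]; ring
          rw [hgc]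
          have hsmul : ((m : ℤ)) • ((m : ℤ)) = ((m * m : ℕ) : ℤ) := by push_cast; simp [smul_eq_mul]
          have hmm2 : m * (m - 1) + 2 * m = m * m + m := by
            cases m with
            | zero => rfl
            | succ s => rw [Nat.succ_sub_one]; ring
          rw [nsmul_eq_mul]
          have : (m : ℤ) * (m : ℤ) = ((m * m : ℕ) : ℤ) := by push_cast; ring
          omega
        rw [hsum]
        have : ∀ j, -z * q ^ ((j : ℤ) - m) = -z * q ^ ((j : ℤ) - m) := fun _ => rfl
        rw [show (-z : ℂ) = (-1) * z by ring, mul_pow]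
        rw [← zpow_natCast ((-1 : ℂ)) m, ← zpow_natCast z m]
      · -- reflect
        have := Finset.prod_range_reflect (fun j => 1 - z⁻¹ * q ^ (m - j)) m
        rw [← this]
        apply Finset.prod_congr rfl
        intro j hj
        have hjm : j < m := Finset.mem_range.mp hj
        have : m - (m - 1 - j) = j + 1 := by omega
        rw [this]
    rw [hsecond, hfirst, hu, Finset.prod_mul_distrib]
    ring
  -- Claim B : the sum side
  have claimB : ∑ k ∈ range (2 * m + 1), q ^ (k * (k - 1) / 2) * G q (2 * m) k * x ^ k
      = u * ∑ k ∈ range (2 * m + 1),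
          (-1 : ℂ) ^ ((k : ℤ) - m) * z ^ ((k : ℤ) - m) *
            q ^ ((((k : ℤ) - m) * (((k : ℤ) - m) - 1) / 2).toNat) * G q (2 * m) k := by
    rw [Finset.mul_sum]
    apply Finset.sum_congr rfl
    intro k hk
    set t : ℤ := (k : ℤ) - m with ht
    have e_toNat : ((t * (t - 1) / 2).toNat : ℤ) = t * (t - 1) / 2 :=
      Int.toNat_of_nonneg (tri_nonneg t)
    have hxk : x ^ k = (-1 : ℂ) ^ (k : ℤ) * z ^ (k : ℤ) * q ^ ((-(m : ℤ)) * k) := by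
      rw [hx, show (-z : ℂ) = (-1) * z by ring, mul_pow, mul_pow, ← zpow_natCast ((-1:ℂ)) k,
        ← zpow_natCast z k, ← zpow_natCast (q ^ (-(m:ℤ))) k, ← zpow_mul]
    have hqnat : q ^ (k * (k - 1) / 2) = q ^ ((k * (k - 1) / 2 : ℕ) : ℤ) := by
      rw [zpow_natCast]
    have hqt : q ^ ((t * (t - 1) / 2).toNat) = q ^ (t * (t - 1) / 2) := by
      rw [← zpow_natCast q ((t * (t - 1) / 2).toNat), e_toNat]
    have harith := int_sq_arith m k
    have hqcomb : q ^ ((k * (k - 1) / 2 : ℕ) : ℤ) * q ^ ((-(m : ℤ)) * k)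
        = q ^ (-((m * (m + 1) / 2 : ℕ) : ℤ)) * q ^ (t * (t - 1) / 2) := by
      rw [← zpow_add₀ hq0, ← zpow_add₀ hq0, ht, harith]
    have hksplit : (k : ℤ) = (m : ℤ) + t := by rw [ht]; ring
    have hm1k : (-1 : ℂ) ^ (k : ℤ) = (-1 : ℂ) ^ (m : ℤ) * (-1 : ℂ) ^ t := by
      rw [hksplit, zpow_add₀ hm1]
    have hzk : z ^ (k : ℤ) = z ^ (m : ℤ) * z ^ t := by
      rw [hksplit, zpow_add₀ hz]
    rw [hxk, hqnat, hqt, hm1k, hzk, hu]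
    linear_combination ((-1:ℂ) ^ (m:ℤ) * (-1:ℂ) ^ t * z ^ (m:ℤ) * z ^ t * G q (2*m) k) * hqcomb
  rw [claimA, claimB] at key
  exact (mul_left_cancel₀ hu0 key).symm


def Kq (q : ℂ) : ℝ :=
  Real.exp (‖q‖ / (1 - ‖q‖)) /
    (Real.exp (-(‖q‖ / (1 - ‖q‖) / (1 - ‖q‖))) * Real.exp (-(‖q‖ / (1 - ‖q‖) / (1 - ‖q‖))))

def gb (q z : ℂ) (t : ℤ) : ℝ :=
  Kq q * ((max ‖z‖ ‖z‖⁻¹) ^ t.natAbs * ‖q‖ ^ ((t * (t - 1) / 2).toNat))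


/-- The summand of the indicator-truncated finite identity. -/
def Bf (q z : ℂ) (m : ℕ) (t : ℤ) : ℂ :=
  if t.natAbs ≤ m then
    (-1 : ℂ) ^ t * z ^ t * q ^ ((t * (t - 1) / 2).toNat) * G q (2 * m) ((m : ℤ) + t).toNat
  else 0


section main
variable {q z : ℂ} (hq : ‖q‖ < 1) (hq0 : q ≠ 0) (hz : z ≠ 0)

lemma B_summable_support (m : ℕ) : ∀ t : ℤ, t ∉ Icc (-(m : ℤ)) m → Bf q z m t = 0 := by
  intro t ht
  rw [Finset.mem_Icc] at ht
  exact if_neg (by omega)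

include hq0 hz in
lemma B_eq_prod (m : ℕ) :
    ∑' t : ℤ, Bf q z m t = ∏ j ∈ range m, ((1 - z * q ^ j) * (1 - z⁻¹ * q ^ (j + 1))) := by
  rw [tsum_eq_sum (B_summable_support m), sum_shift m (Bf q z m),
    finite_jtp q z hq0 hz m]
  apply Finset.sum_congr rfl
  intro k hk
  have hk' : k < 2 * m + 1 := Finset.mem_range.mp hk
  rw [Bf, if_pos (by omega)]
  congr 2
  omega

-- norm of a zpow
lemma zpow_norm_le (w : ℂ) (hw : w ≠ 0) (t : ℤ) :
    ‖w ^ t‖ ≤ (max ‖w‖ ‖w‖⁻¹) ^ t.natAbs := by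
  set n := t.natAbs with hn
  rcases Int.natAbs_eq t with h | h
  · rw [h, zpow_natCast, norm_pow]
    exact pow_le_pow_left₀ (norm_nonneg w) (le_max_left _ _) _
  · rw [h, zpow_neg, zpow_natCast, norm_inv, norm_pow, ← inv_pow]
    exact pow_le_pow_left₀ (inv_nonneg.mpr (norm_nonneg w)) (le_max_right _ _) _

include hq in
lemma G_norm_le (m k : ℕ) (hk : k ≤ 2 * m) :
    ‖G q (2 * m) k‖ ≤ Real.exp (‖q‖ / (1 - ‖q‖)) /
      (Real.exp (-(‖q‖ / (1 - ‖q‖) / (1 - ‖q‖))) * Real.exp (-(‖q‖ / (1 - ‖q‖) / (1 - ‖q‖)))) := by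
  set c : ℝ := Real.exp (-(‖q‖ / (1 - ‖q‖) / (1 - ‖q‖))) with hc
  have hcpos : 0 < c := Real.exp_pos _
  have h := congrArg norm (G_mul_F q (2 * m) k hk)
  rw [norm_mul, norm_mul] at h
  have h1 : c ≤ ‖F q k‖ := F_norm_ge hq k
  have h2 : c ≤ ‖F q (2 * m - k)‖ := F_norm_ge hq (2 * m - k)
  have h3 : ‖F q (2 * m)‖ ≤ Real.exp (‖q‖ / (1 - ‖q‖)) := F_norm_le hq (2 * m)
  have hG : (0 : ℝ) ≤ ‖G q (2 * m) k‖ := norm_nonneg _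
  rw [le_div_iff₀ (by positivity)]
  nlinarith [mul_le_mul_of_nonneg_left h2 (mul_nonneg hG hcpos.le),
    mul_le_mul_of_nonneg_left h1 hG,
    mul_le_mul_of_nonneg_right (mul_le_mul_of_nonneg_left h1 hG) (norm_nonneg (F q (2 * m - k)))]


include hq hz in
lemma B_norm_le (m : ℕ) (t : ℤ) : ‖Bf q z m t‖ ≤ gb q z t := by
  unfold Bf
  split_ifs with h
  · have h1 : ‖(-1 : ℂ) ^ t‖ = 1 := by rw [norm_zpow]; simp
    have h2 := zpow_norm_le z hz t
    have h4 := G_norm_le hq m ((m : ℤ) + t).toNat (by omega)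
    calc ‖(-1 : ℂ) ^ t * z ^ t * q ^ ((t * (t - 1) / 2).toNat) * G q (2 * m) ((m : ℤ) + t).toNat‖
        = 1 * ‖z ^ t‖ * ‖q‖ ^ ((t * (t - 1) / 2).toNat) * ‖G q (2 * m) ((m : ℤ) + t).toNat‖ := by
          rw [norm_mul, norm_mul, norm_mul, h1, norm_pow]
      _ ≤ 1 * (max ‖z‖ ‖z‖⁻¹) ^ t.natAbs * ‖q‖ ^ ((t * (t - 1) / 2).toNat) *
          (Real.exp (‖q‖ / (1 - ‖q‖)) /
            (Real.exp (-(‖q‖ / (1 - ‖q‖) / (1 - ‖q‖))) *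
              Real.exp (-(‖q‖ / (1 - ‖q‖) / (1 - ‖q‖))))) := by
          gcongr
      _ = gb q z t := by rw [gb, Kq]; ring
  · rw [norm_zero]
    have hz0 : (0:ℝ) < ‖z‖ := norm_pos_iff.2 hz
    unfold gb Kq
    positivity

lemma gb_nat_step (n : ℕ) :
    gb q z ((n : ℤ) + 1) = gb q z (n : ℤ) * ((max ‖z‖ ‖z‖⁻¹) * ‖q‖ ^ n) := by
  unfold gb
  have h1 : ((n : ℤ) + 1).natAbs = (n : ℤ).natAbs + 1 := by omega
  have h2 : ((((n : ℤ) + 1) * (((n : ℤ) + 1) - 1)) / 2).toNat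
      = (((n : ℤ) * ((n : ℤ) - 1)) / 2).toNat + n := by
    obtain ⟨r, hr⟩ := Int.even_mul_pred_self ((n : ℤ))
    obtain ⟨s, hs⟩ := Int.even_mul_pred_self ((n : ℤ) + 1)
    have h3 : ((n : ℤ) + 1) * (((n : ℤ) + 1) - 1) = (n : ℤ) * ((n : ℤ) - 1) + 2 * n := by ring
    have t1 := tri_nonneg ((n : ℤ))
    have t2 := tri_nonneg ((n : ℤ) + 1)
    set P := (n : ℤ) * ((n : ℤ) - 1) with hP
    set Q := ((n : ℤ) + 1) * (((n : ℤ) + 1) - 1) with hQ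
    omega
  rw [h1, h2, pow_succ, pow_add]
  ring

lemma gb_neg_step (n : ℕ) :
    gb q z (-(n : ℤ) - 2) = gb q z (-(n : ℤ) - 1) * ((max ‖z‖ ‖z‖⁻¹) * ‖q‖ ^ (n + 2)) := by
  unfold gb
  have h1 : (-(n : ℤ) - 2).natAbs = (-(n : ℤ) - 1).natAbs + 1 := by omega
  have h2 : ((-(n : ℤ) - 2) * ((-(n : ℤ) - 2) - 1) / 2).toNat
      = ((-(n : ℤ) - 1) * ((-(n : ℤ) - 1) - 1) / 2).toNat + (n + 2) := by
    obtain ⟨r, hr⟩ := Int.even_mul_pred_self (-(n : ℤ) - 1)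
    obtain ⟨s, hs⟩ := Int.even_mul_pred_self (-(n : ℤ) - 2)
    have h3 : (-(n : ℤ) - 2) * ((-(n : ℤ) - 2) - 1)
        = (-(n : ℤ) - 1) * ((-(n : ℤ) - 1) - 1) + 2 * (n + 2) := by ring
    have t1 := tri_nonneg (-(n : ℤ) - 1)
    have t2 := tri_nonneg (-(n : ℤ) - 2)
    set P := (-(n : ℤ) - 1) * ((-(n : ℤ) - 1) - 1) with hP
    set Q := (-(n : ℤ) - 2) * ((-(n : ℤ) - 2) - 1) with hQ
    omega
  rw [h1, h2, pow_succ, pow_add]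
  ring

include hq hq0 hz in
lemma gb_summable : Summable (gb q z) := by
  have hMz0 : 0 < max ‖z‖ ‖z‖⁻¹ := lt_of_lt_of_le (norm_pos_iff.2 hz) (le_max_left _ _)
  have hq0' : (0:ℝ) < ‖q‖ := norm_pos_iff.2 hq0
  have hgb_pos : ∀ t, 0 < gb q z t := by
    intro t; unfold gb Kq; positivity
  have htend : Tendsto (fun n : ℕ => (max ‖z‖ ‖z‖⁻¹) * ‖q‖ ^ n) atTop (𝓝 0) := by
    have h := tendsto_pow_atTop_nhds_zero_of_lt_one (norm_nonneg q) hq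
    simpa using h.const_mul (max ‖z‖ ‖z‖⁻¹)
  have hev : ∀ᶠ n : ℕ in atTop, (max ‖z‖ ‖z‖⁻¹) * ‖q‖ ^ n ≤ 1 / 2 :=
    htend.eventually_le_const (by norm_num)
  apply Summable.of_nat_of_neg_add_one
  · apply summable_of_ratio_norm_eventually_le (r := 1 / 2) (by norm_num)
    filter_upwards [hev] with n hn
    rw [Real.norm_of_nonneg (hgb_pos _).le, Real.norm_of_nonneg (hgb_pos _).le]
    have hcast : ((n + 1 : ℕ) : ℤ) = (n : ℤ) + 1 := by push_cast; ring
    rw [hcast, gb_nat_step]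
    calc gb q z (n : ℤ) * ((max ‖z‖ ‖z‖⁻¹) * ‖q‖ ^ n)
        ≤ gb q z (n : ℤ) * (1 / 2) := mul_le_mul_of_nonneg_left hn (hgb_pos _).le
      _ = 1 / 2 * gb q z (n : ℤ) := by ring
  · apply summable_of_ratio_norm_eventually_le (r := 1 / 2) (by norm_num)
    filter_upwards [hev] with n hn
    rw [Real.norm_of_nonneg (hgb_pos _).le, Real.norm_of_nonneg (hgb_pos _).le]
    have e1 : (-(((n + 1 : ℕ) : ℤ) + 1) : ℤ) = -(n : ℤ) - 2 := by push_cast; ring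
    have e2 : (-(((n : ℕ) : ℤ) + 1) : ℤ) = -(n : ℤ) - 1 := by push_cast; ring
    rw [e1, e2, gb_neg_step]
    have hq2 : ‖q‖ ^ (n + 2) ≤ ‖q‖ ^ n := by
      apply pow_le_pow_of_le_one (norm_nonneg q) hq.le; omega
    calc gb q z (-(n : ℤ) - 1) * ((max ‖z‖ ‖z‖⁻¹) * ‖q‖ ^ (n + 2))
        ≤ gb q z (-(n : ℤ) - 1) * ((max ‖z‖ ‖z‖⁻¹) * ‖q‖ ^ n) := by
          apply mul_le_mul_of_nonneg_left _ (hgb_pos _).le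
          exact mul_le_mul_of_nonneg_left hq2 hMz0.le
      _ ≤ gb q z (-(n : ℤ) - 1) * (1 / 2) := mul_le_mul_of_nonneg_left hn (hgb_pos _).le
      _ = 1 / 2 * gb q z (-(n : ℤ) - 1) := by ring


include hq in
lemma FF_mult : Multipliable (fun j : ℕ => 1 - q ^ (j + 1)) := by
  have hs : Summable (fun n : ℕ => -(q ^ (n + 1))) := by
    have h := (summable_geometric_of_norm_lt_one hq).mul_left q
    exact (h.congr fun n => by rw [← pow_succ']).neg
  have h2 := multipliable_one_add hs
  have he : (fun n : ℕ => 1 + -(q ^ (n + 1))) = fun n : ℕ => 1 - q ^ (n + 1) :=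
    funext fun n => by ring
  exact he ▸ h2

include hq in
lemma F_tendsto : Tendsto (F q) atTop (𝓝 (∏' j : ℕ, (1 - q ^ (j + 1)))) :=
  (FF_mult hq).hasProd.tendsto_prod_nat

include hq in
lemma Finf_ne : (∏' j : ℕ, (1 - q ^ (j + 1))) ≠ 0 := by
  have hnorm : Real.exp (-(‖q‖ / (1 - ‖q‖) / (1 - ‖q‖))) ≤ ‖∏' j : ℕ, (1 - q ^ (j + 1))‖ :=
    ge_of_tendsto (F_tendsto hq).norm (Eventually.of_forall (F_norm_ge hq))
  intro h0
  rw [h0, norm_zero] at hnorm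
  exact (Real.exp_pos _).not_ge hnorm

include hq hz in
lemma B_tendsto (t : ℤ) : Tendsto (fun m => Bf q z m t) atTop
    (𝓝 ((-1 : ℂ) ^ t * z ^ t * q ^ ((t * (t - 1) / 2).toNat) *
      (∏' j : ℕ, (1 - q ^ (j + 1)))⁻¹)) := by
  set L := ∏' j : ℕ, (1 - q ^ (j + 1)) with hL
  have hLne : L ≠ 0 := Finf_ne hq
  have h2m : Tendsto (fun m : ℕ => 2 * m) atTop atTop :=
    tendsto_atTop_mono (fun m => by simp only [id_eq]; omega) tendsto_id
  have hplus : Tendsto (fun m : ℕ => ((m : ℤ) + t).toNat) atTop atTop := by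
    rw [tendsto_atTop_atTop]
    intro b; exact ⟨b + t.natAbs, fun a ha => by omega⟩
  have hminus : Tendsto (fun m : ℕ => ((m : ℤ) - t).toNat) atTop atTop := by
    rw [tendsto_atTop_atTop]
    intro b; exact ⟨b + t.natAbs, fun a ha => by omega⟩
  have hFt := F_tendsto hq
  have hmain : Tendsto (fun m : ℕ => F q (2 * m) * (F q (((m : ℤ) + t).toNat))⁻¹ *
      (F q (((m : ℤ) - t).toNat))⁻¹) atTop (𝓝 (L * L⁻¹ * L⁻¹)) :=
    ((hFt.comp h2m).mul ((hFt.comp hplus).inv₀ hLne)).mul ((hFt.comp hminus).inv₀ hLne)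
  have hconst := (tendsto_const_nhds
    (x := (-1 : ℂ) ^ t * z ^ t * q ^ ((t * (t - 1) / 2).toNat)) (f := atTop (α := ℕ))).mul hmain
  have hckey : (-1 : ℂ) ^ t * z ^ t * q ^ ((t * (t - 1) / 2).toNat) * (L * L⁻¹ * L⁻¹)
      = (-1 : ℂ) ^ t * z ^ t * q ^ ((t * (t - 1) / 2).toNat) * L⁻¹ := by
    rw [mul_inv_cancel₀ hLne, one_mul]
  rw [hckey] at hconst
  apply Tendsto.congr' _ hconst
  filter_upwards [eventually_ge_atTop t.natAbs] with m hm
  rw [Bf, if_pos hm]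
  have hk : ((m : ℤ) + t).toNat ≤ 2 * m := by omega
  have hsub : 2 * m - ((m : ℤ) + t).toNat = ((m : ℤ) - t).toNat := by omega
  have hGF := G_mul_F q (2 * m) (((m : ℤ) + t).toNat) hk
  rw [hsub] at hGF
  have h1 : F q (((m : ℤ) + t).toNat) ≠ 0 := F_ne_zero hq _
  have h2 : F q (((m : ℤ) - t).toNat) ≠ 0 := F_ne_zero hq _
  have hGval : G q (2 * m) (((m : ℤ) + t).toNat)
      = F q (2 * m) * (F q (((m : ℤ) + t).toNat))⁻¹ * (F q (((m : ℤ) - t).toNat))⁻¹ := by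
    field_simp
    linear_combination hGF
  rw [hGval]

include hq hq0 hz in
theorem jtp_main :
    ∏' n : ℕ, ((1 - z * q ^ n) * (1 - z⁻¹ * q ^ (n + 1)) * (1 - q ^ (n + 1))) =
      ∑' n : ℤ, ((-1 : ℂ) ^ n * z ^ n * q ^ ((n * (n - 1)) / 2).toNat) := by
  set L := ∏' j : ℕ, (1 - q ^ (j + 1)) with hL
  have hLne : L ≠ 0 := Finf_ne hq
  have mA : Multipliable (fun n : ℕ => 1 - z * q ^ n) := by
    have hs : Summable (fun n : ℕ => -(z * q ^ n)) :=
      ((summable_geometric_of_norm_lt_one hq).mul_left z).neg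
    have he : (fun n : ℕ => 1 + -(z * q ^ n)) = fun n : ℕ => 1 - z * q ^ n :=
      funext fun n => by ring
    exact he ▸ multipliable_one_add hs
  have mB : Multipliable (fun n : ℕ => 1 - z⁻¹ * q ^ (n + 1)) := by
    have hs : Summable (fun n : ℕ => -(z⁻¹ * q ^ (n + 1))) := by
      have h := (summable_geometric_of_norm_lt_one hq).mul_left (z⁻¹ * q)
      exact (h.congr fun n => by rw [pow_succ']; ring).neg
    have he : (fun n : ℕ => 1 + -(z⁻¹ * q ^ (n + 1))) = fun n : ℕ => 1 - z⁻¹ * q ^ (n + 1) :=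
      funext fun n => by ring
    exact he ▸ multipliable_one_add hs
  have mC : Multipliable (fun j : ℕ => 1 - q ^ (j + 1)) := FF_mult hq
  have hsplit : ∏' n : ℕ, ((1 - z * q ^ n) * (1 - z⁻¹ * q ^ (n + 1)) * (1 - q ^ (n + 1)))
      = (∏' n : ℕ, ((1 - z * q ^ n) * (1 - z⁻¹ * q ^ (n + 1)))) * L :=
    (mA.mul mB).tprod_mul mC
  have hPA : Tendsto (fun m => ∏ j ∈ range m, ((1 - z * q ^ j) * (1 - z⁻¹ * q ^ (j + 1))))
      atTop (𝓝 (∏' n : ℕ, ((1 - z * q ^ n) * (1 - z⁻¹ * q ^ (n + 1))))) :=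
    (mA.mul mB).hasProd.tendsto_prod_nat
  have hTan : Tendsto (fun m => ∑' t : ℤ, Bf q z m t) atTop
      (𝓝 (∑' t : ℤ, ((-1 : ℂ) ^ t * z ^ t * q ^ ((t * (t - 1) / 2).toNat) * L⁻¹))) :=
    tendsto_tsum_of_dominated_convergence (gb_summable hq hq0 hz)
      (fun t => B_tendsto hq hz t) (Eventually.of_forall fun m t => B_norm_le hq hz m t)
  have hfun : (fun m => ∑' t : ℤ, Bf q z m t)
      = fun m => ∏ j ∈ range m, ((1 - z * q ^ j) * (1 - z⁻¹ * q ^ (j + 1))) :=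
    funext (B_eq_prod hq0 hz)
  rw [hfun] at hTan
  have huniq : (∏' n : ℕ, ((1 - z * q ^ n) * (1 - z⁻¹ * q ^ (n + 1))))
      = ∑' t : ℤ, ((-1 : ℂ) ^ t * z ^ t * q ^ ((t * (t - 1) / 2).toNat) * L⁻¹) :=
    tendsto_nhds_unique hPA hTan
  rw [hsplit, huniq, tsum_mul_right, mul_assoc, inv_mul_cancel₀ hLne, mul_one]

end main

theorem jtp_zero (z : ℂ) (hz : z ≠ 0) :
    ∏' n : ℕ, ((1 - z * (0:ℂ) ^ n) * (1 - z⁻¹ * (0:ℂ) ^ (n + 1)) * (1 - (0:ℂ) ^ (n + 1))) =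
      ∑' n : ℤ, ((-1 : ℂ) ^ n * z ^ n * (0:ℂ) ^ ((n * (n - 1)) / 2).toNat) := by
  have hLs : ∀ n : ℕ, n ∉ ({0} : Finset ℕ) →
      (1 - z * (0:ℂ) ^ n) * (1 - z⁻¹ * (0:ℂ) ^ (n + 1)) * (1 - (0:ℂ) ^ (n + 1)) = 1 := by
    intro n hn
    have hn0 : n ≠ 0 := by simpa using hn
    rw [zero_pow hn0, zero_pow (Nat.succ_ne_zero n)]
    ring
  have hL : ∏' n : ℕ, ((1 - z * (0:ℂ) ^ n) * (1 - z⁻¹ * (0:ℂ) ^ (n + 1)) * (1 - (0:ℂ) ^ (n + 1)))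
      = 1 - z := by
    rw [tprod_eq_prod hLs]
    simp
  have hRs : ∀ t : ℤ, t ∉ ({0, 1} : Finset ℤ) →
      (-1 : ℂ) ^ t * z ^ t * (0:ℂ) ^ ((t * (t - 1)) / 2).toNat = 0 := by
    intro t ht
    simp only [Finset.mem_insert, Finset.mem_singleton] at ht
    push_neg at ht
    have h2 : 2 ≤ t * (t - 1) := by
      rcases le_or_gt t (-1) with h | h
      · nlinarith
      · have h3 : 2 ≤ t := by omega
        nlinarith
    have hE : ((t * (t - 1)) / 2).toNat ≠ 0 := by omega
    rw [zero_pow hE, mul_zero]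
  have hR : ∑' n : ℤ, ((-1 : ℂ) ^ n * z ^ n * (0:ℂ) ^ ((n * (n - 1)) / 2).toNat)
      = 1 - z := by
    rw [tsum_eq_sum hRs, Finset.sum_insert (by decide), Finset.sum_singleton]
    norm_num
    ring
  rw [hL, hR]

end JTP
end

/-- Jacobi's triple product identity: for `‖q‖ < 1` and `z ≠ 0`,
`∏_{n≥1}(1 - z q^{n-1})(1 - z⁻¹ q^n)(1 - q^n) = ∑_{n∈ℤ} (-1)^n z^n q^{n(n-1)/2}`. -/
theorem jacobi_triple_product (q z : ℂ) (hq : ‖q‖ < 1) (hz : z ≠ 0) :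
    ∏' n : ℕ, ((1 - z * q ^ n) * (1 - z⁻¹ * q ^ (n + 1)) * (1 - q ^ (n + 1))) =
      ∑' n : ℤ, ((-1 : ℂ) ^ n * z ^ n * q ^ ((n * (n - 1)) / 2).toNat) := by
  by_cases hq0 : q = 0
  · subst hq0
    exact JTP.jtp_zero z hz
  · exact JTP.jtp_main hq hq0 hz
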